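/- Angular momentum bound for a bound Kepler pair: let α, β, h > 0, let ζ ∈ ℝ³ with ζ ≠ 0, and let v ∈ ℝ³ satisfy ½ α ‖v‖² − β/‖ζ‖ ≤ −h. Then the angular momentum J = α (ζ × v) satisfies ‖J‖ ≤ β √(α/(2h)). -/

import Mathlib

/-- The cross product on `ℝ³ = EuclideanSpace ℝ (Fin 3)`. -/
noncomputable def cross3 (a b : EuclideanSpace ℝ (Fin 3)) : EuclideanSpace ℝ (Fin 3) :=
  WithLp.toLp 2 ![a 1 * b 2 - a 2 * b 1, a 2 * b 0 - a 0 * b 2, a 0 * b 1 - a 1 * b 0]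

lemma cross3_norm_le (a b : EuclideanSpace ℝ (Fin 3)) :
    ‖cross3 a b‖ ≤ ‖a‖ * ‖b‖ := by
  have h1 : ‖cross3 a b‖ = Real.sqrt (∑ i, (cross3 a b) i ^ 2) := by
    rw [EuclideanSpace.norm_eq]
    congr 1; apply Finset.sum_congr rfl; intro i _; rw [Real.norm_eq_abs, sq_abs]
  have h2 : ∀ x : EuclideanSpace ℝ (Fin 3), ‖x‖ = Real.sqrt (∑ i, x i ^ 2) := by
    intro x
    rw [EuclideanSpace.norm_eq]
    congr 1; apply Finset.sum_congr rfl; intro i _; rw [Real.norm_eq_abs, sq_abs]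
  rw [h1, h2 a, h2 b, ← Real.sqrt_mul (by positivity)]
  apply Real.sqrt_le_sqrt
  simp only [cross3, WithLp.ofLp_toLp, Fin.sum_univ_three, Matrix.cons_val_zero, Matrix.cons_val_one,
    Matrix.head_cons, Matrix.cons_val_two, Matrix.tail_cons]
  nlinarith [sq_nonneg (a 0 * b 0 + a 1 * b 1 + a 2 * b 2)]

/-- **Angular momentum bound for a bound Kepler pair.** If `½α‖v‖² − β/‖ζ‖ ≤ −h` with
`α, β, h > 0` and `ζ ≠ 0`, then the angular momentum `J = α(ζ × v)` satisfies
`‖J‖ ≤ β √(α/(2h))`. -/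
theorem kepler_pair_angular_momentum_bound
    (α β h : ℝ) (hα : 0 < α) (hβ : 0 < β) (hh : 0 < h)
    (ζ v : EuclideanSpace ℝ (Fin 3)) (hζ : ζ ≠ 0)
    (hE : (1 / 2) * α * ‖v‖ ^ 2 - β / ‖ζ‖ ≤ -h) :
    ‖α • cross3 ζ v‖ ≤ β * Real.sqrt (α / (2 * h)) := by
  set r := ‖ζ‖ with hr
  set x := ‖v‖ with hx
  have hr0 : 0 < r := norm_pos_iff.mpr hζ
  have hx0 : 0 ≤ x := norm_nonneg v
  have hβr : r * (h + (1/2) * α * x ^ 2) ≤ β := by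
    have : (1/2) * α * x ^ 2 + h ≤ β / r := by linarith
    calc r * (h + (1/2) * α * x ^ 2) ≤ r * (β / r) := by
          apply mul_le_mul_of_nonneg_left (by linarith) hr0.le
      _ = β := by field_simp
  set s := Real.sqrt (α / (2 * h)) with hs
  have hs0 : 0 < s := Real.sqrt_pos.mpr (by positivity)
  have hs2 : s ^ 2 = α / (2 * h) := Real.sq_sqrt (by positivity)
  have key : α * x ≤ (h + (1/2) * α * x ^ 2) * s := by
    have hα2 : α = 2 * h * s ^ 2 := by rw [hs2]; field_simp
    nlinarith [sq_nonneg (s * x - 1), hh.le, hs0.le]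
  have hnorm : ‖α • cross3 ζ v‖ = α * ‖cross3 ζ v‖ := by
    rw [norm_smul, Real.norm_eq_abs, abs_of_pos hα]
  rw [hnorm]
  calc α * ‖cross3 ζ v‖ ≤ α * (r * x) := by
        apply mul_le_mul_of_nonneg_left (cross3_norm_le ζ v) hα.le
    _ = (α * x) * r := by ring
    _ ≤ ((h + (1/2) * α * x ^ 2) * s) * r := by
        apply mul_le_mul_of_nonneg_right key hr0.le
    _ = (r * (h + (1/2) * α * x ^ 2)) * s := by ring
    _ ≤ β * s := mul_le_mul_of_nonneg_right hβr hs0.le
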